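/- Let (φ, b) solve φ' = (1 + b²)/(2h²), b' = 2bφ on (0, R] with b(R) ≠ 0 and h(t) = t + O(t³) near 0. Then there exist constants c₅, c₆ > 0 such that b(r)² ≥ b(R)²·e^{-c₆ + c₅/r²} for all sufficiently small r ∈ (0, R]. -/

import Mathlib

open Real Filter Set

lemma mono_aux (F d : ℝ → ℝ) (s : ℝ)
    (hF : ∀ r ∈ Ioc (0:ℝ) s, HasDerivAt F (d r) r)
    (hd : ∀ r ∈ Ioc (0:ℝ) s, 0 ≤ d r) :
    ∀ r ∈ Ioc (0:ℝ) s, F r ≤ F s := by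
  intro r hr
  have hs : (0:ℝ) < s := hr.1.trans_le hr.2
  have hmono : MonotoneOn F (Ioc (0:ℝ) s) := by
    apply monotoneOn_of_deriv_nonneg (convex_Ioc 0 s)
      (fun x hx => (hF x hx).continuousAt.continuousWithinAt)
    · intro x hx
      rw [interior_Ioc] at hx
      exact ((hF x (Ioo_subset_Ioc_self hx)).differentiableAt).differentiableWithinAt
    · intro x hx
      rw [interior_Ioc] at hx
      rw [(hF x (Ioo_subset_Ioc_self hx)).deriv]
      exact hd x (Ioo_subset_Ioc_self hx)
  exact hmono hr ⟨hs, le_refl s⟩ hr.2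

lemma phi_upper (φ X dφ dX : ℝ → ℝ) (s : ℝ)
    (hφ : ∀ r ∈ Ioc (0:ℝ) s, HasDerivAt φ (dφ r) r)
    (hX : ∀ r ∈ Ioc (0:ℝ) s, HasDerivAt X (dX r) r)
    (hle : ∀ r ∈ Ioc (0:ℝ) s, dX r ≤ dφ r) :
    ∀ r ∈ Ioc (0:ℝ) s, φ r ≤ (φ s - X s) + X r := by
  intro r hr
  have := mono_aux (fun x => φ x - X x) (fun x => dφ x - dX x) s
    (fun x hx => (hφ x hx).sub (hX x hx)) (fun x hx => sub_nonneg.2 (hle x hx)) r hr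
  linarith

lemma bsq_lower (b φ Ψ dΨ : ℝ → ℝ) (s : ℝ)
    (hb : ∀ r ∈ Ioc (0:ℝ) s, HasDerivAt b (2 * b r * φ r) r)
    (hΨ : ∀ r ∈ Ioc (0:ℝ) s, HasDerivAt Ψ (dΨ r) r)
    (hle : ∀ r ∈ Ioc (0:ℝ) s, 4 * φ r ≤ dΨ r) :
    ∀ r ∈ Ioc (0:ℝ) s, b s ^ 2 * Real.exp (Ψ r - Ψ s) ≤ b r ^ 2 := by
  intro r hr
  have key := mono_aux (fun x => -(b x ^ 2 * Real.exp (-(Ψ x))))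
    (fun x => b x ^ 2 * Real.exp (-(Ψ x)) * (dΨ x - 4 * φ x)) s
    (fun x hx => by
      have h1 : HasDerivAt (fun y => b y ^ 2) ((2:ℕ) * b x ^ 1 * (2 * b x * φ x)) x :=
        (hb x hx).pow 2
      have h2 : HasDerivAt (fun y => Real.exp (-(Ψ y))) (Real.exp (-(Ψ x)) * -(dΨ x)) x :=
        ((hΨ x hx).neg).exp
      have h3 : HasDerivAt (fun y => -(b y ^ 2 * Real.exp (-(Ψ y))))
          (-((2:ℕ) * b x ^ 1 * (2 * b x * φ x) * Real.exp (-(Ψ x)) + b x ^ 2 * (Real.exp (-(Ψ x)) * -(dΨ x)))) x :=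
        (h1.mul h2).neg
      convert h3 using 1
      push_cast
      ring)
    (fun x hx => mul_nonneg (mul_nonneg (sq_nonneg _) (Real.exp_pos _).le)
      (sub_nonneg.2 (hle x hx))) r hr
  have h1 : b s ^ 2 * Real.exp (-(Ψ s)) ≤ b r ^ 2 * Real.exp (-(Ψ r)) := by
    linarith
  calc b s ^ 2 * Real.exp (Ψ r - Ψ s)
      = (b s ^ 2 * Real.exp (-(Ψ s))) * Real.exp (Ψ r) := by
        rw [mul_assoc, ← Real.exp_add]; ring_nf
    _ ≤ (b r ^ 2 * Real.exp (-(Ψ r))) * Real.exp (Ψ r) :=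
        mul_le_mul_of_nonneg_right h1 (Real.exp_pos _).le
    _ = b r ^ 2 := by rw [mul_assoc, ← Real.exp_add, neg_add_cancel, Real.exp_zero, mul_one]

set_option maxHeartbeats 1000000 in
theorem b_exponential_lower_bound
    (h φ b : ℝ → ℝ) (R : ℝ) (hR : 0 < R)
    (hhpos : ∀ t ∈ Ioi (0:ℝ), 0 < h t)
    (hhasymp : ∃ C t₁ : ℝ, 0 < C ∧ 0 < t₁ ∧
      ∀ t ∈ Ioc (0:ℝ) t₁, |h t - t| ≤ C * t ^ 3)
    (hODE : ∀ r ∈ Ioc (0:ℝ) R,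
      HasDerivAt φ ((1 + b r ^ 2) / (2 * h r ^ 2)) r ∧
      HasDerivAt b (2 * b r * φ r) r)
    (hbR : b R ≠ 0) :
    ∃ c₅ c₆ ε : ℝ, 0 < c₅ ∧ 0 < c₆ ∧ 0 < ε ∧ ε ≤ R ∧
      ∀ r ∈ Ioc (0:ℝ) ε,
        b R ^ 2 * Real.exp (-c₆ + c₅ / r ^ 2) ≤ b r ^ 2 := by
  obtain ⟨C, t₁, hC, ht₁, hasym⟩ := hhasymp
  have hbR2 : 0 < b R ^ 2 := (sq_nonneg (b R)).lt_of_ne (Ne.symm (pow_ne_zero 2 hbR))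
  set t₀ := min R (min t₁ (Real.sqrt C)⁻¹) with ht₀def
  have hsC : 0 < Real.sqrt C := Real.sqrt_pos.mpr hC
  have ht₀pos : 0 < t₀ := lt_min hR (lt_min ht₁ (inv_pos.mpr hsC))
  have ht₀R : t₀ ≤ R := min_le_left _ _
  have ht₀t₁ : t₀ ≤ t₁ := le_trans (min_le_right _ _) (min_le_left _ _)
  have ht₀C : t₀ ≤ (Real.sqrt C)⁻¹ := le_trans (min_le_right _ _) (min_le_right _ _)
  clear_value t₀
  have hsub : Ioc (0:ℝ) t₀ ⊆ Ioc (0:ℝ) R := Ioc_subset_Ioc_right ht₀R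
  have hφ' : ∀ r ∈ Ioc (0:ℝ) R, HasDerivAt φ ((1 + b r ^ 2) / (2 * h r ^ 2)) r :=
    fun r hr => (hODE r hr).1
  have hb' : ∀ r ∈ Ioc (0:ℝ) R, HasDerivAt b (2 * b r * φ r) r :=
    fun r hr => (hODE r hr).2
  -- h r ≤ 2 r on (0, t₀]
  have hh2 : ∀ r ∈ Ioc (0:ℝ) t₀, h r ≤ 2 * r := by
    intro r hr
    have h1 := hasym r ⟨hr.1, hr.2.trans ht₀t₁⟩
    have h2 : h r - r ≤ C * r ^ 3 := (abs_le.mp h1).2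
    have h3 : r * Real.sqrt C ≤ 1 := by
      have h4 : r ≤ (Real.sqrt C)⁻¹ := hr.2.trans ht₀C
      calc r * Real.sqrt C ≤ (Real.sqrt C)⁻¹ * Real.sqrt C :=
            mul_le_mul_of_nonneg_right h4 hsC.le
        _ = 1 := inv_mul_cancel₀ hsC.ne'
    have h5 : (r * Real.sqrt C) ^ 2 ≤ 1 := by nlinarith [mul_nonneg hr.1.le hsC.le]
    have h6 : C * r ^ 2 ≤ 1 := by
      have hs2 : Real.sqrt C ^ 2 = C := Real.sq_sqrt hC.le
      calc C * r ^ 2 = (r * Real.sqrt C) ^ 2 := by rw [mul_pow, hs2]; ring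
        _ ≤ 1 := h5
    nlinarith [hr.1]
  -- lower bound for φ' in terms of any y ≤ 1 + b r ^ 2
  have hlb : ∀ r ∈ Ioc (0:ℝ) t₀, ∀ y : ℝ, y ≤ 1 + b r ^ 2 →
      y / (8 * r ^ 2) ≤ (1 + b r ^ 2) / (2 * h r ^ 2) := by
    intro r hr y hy
    have hrpos := hr.1
    have hhp : 0 < h r := hhpos r hr.1
    have h2r := hh2 r hr
    have hd1 : (0:ℝ) < 2 * h r ^ 2 := by positivity
    have hd2 : 2 * h r ^ 2 ≤ 8 * r ^ 2 := by nlinarith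
    calc y / (8 * r ^ 2) ≤ (1 + b r ^ 2) / (8 * r ^ 2) :=
          (div_le_div_iff_of_pos_right (show (0:ℝ) < 8 * r ^ 2 by positivity)).mpr hy
      _ ≤ (1 + b r ^ 2) / (2 * h r ^ 2) :=
          div_le_div_of_nonneg_left (by positivity) hd1 hd2
  -- rpow derivative helper
  have hrpowD : ∀ (c p x : ℝ), x ≠ 0 →
      HasDerivAt (fun y : ℝ => c * y ^ p) (c * p * x ^ (p - 1)) x := by
    intro c p x hx
    simpa [mul_assoc] using
      (Real.hasDerivAt_rpow_const (x := x) (p := p) (Or.inl hx)).const_mul c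
  have hnegpow : ∀ (x : ℝ), 0 < x → ∀ n : ℕ, x ^ (-(n:ℝ)) = (x ^ n)⁻¹ := by
    intro x hx n
    rw [Real.rpow_neg hx.le, Real.rpow_natCast]
  have habs : ∀ (A r s : ℝ), 0 < r → r ≤ s → -(4 * |A| * s) ≤ 4 * A * r - 4 * A * s := by
    intro A r s hrp hrs
    rcases abs_cases A with ⟨hA, _⟩ | ⟨hA, _⟩ <;> nlinarith [abs_nonneg A]
  -- Phase 0 : φ ≤ φ R on (0, R], hence b r ^ 2 > 0 everywhere
  have hφle : ∀ r ∈ Ioc (0:ℝ) R, φ r ≤ φ R :=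
    mono_aux φ (fun r => (1 + b r ^ 2) / (2 * h r ^ 2)) R hφ'
      (fun r hr => by
        have := hhpos r hr.1
        positivity)
  have hB0 := bsq_lower b φ (fun x => 4 * φ R * x) (fun _ => 4 * φ R) R hb'
    (fun r _ => by simpa using (hasDerivAt_id r).const_mul (4 * φ R))
    (fun r hr => by have := hφle r hr; linarith)
  have hBpos : 0 < b t₀ ^ 2 :=
    lt_of_lt_of_le (by positivity) (hB0 t₀ ⟨ht₀pos, ht₀R⟩)
  have hbt₀ : ∀ r ∈ Ioc (0:ℝ) t₀, HasDerivAt b (2 * b r * φ r) r :=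
    fun r hr => hb' r (hsub hr)
  have hφt₀ : ∀ r ∈ Ioc (0:ℝ) t₀, HasDerivAt φ ((1 + b r ^ 2) / (2 * h r ^ 2)) r :=
    fun r hr => hφ' r (hsub hr)
  -- Phase 1 : φ r ≤ A₁ + X₁ r
  set X₁ : ℝ → ℝ := fun x => -(1/8) * x ^ (-1:ℝ) with hX₁def
  have hphi1 := phi_upper φ X₁ (fun r => (1 + b r ^ 2) / (2 * h r ^ 2))
    (fun r => -(1/8) * (-1) * r ^ ((-1:ℝ) - 1)) t₀ hφt₀
    (fun r hr => hrpowD (-(1/8)) (-1) r hr.1.ne')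
    (fun r hr => by
      have he : -(1/8) * (-1:ℝ) * r ^ ((-1:ℝ) - 1) = 1 / (8 * r ^ 2) := by
        rw [show ((-1:ℝ) - 1) = -((2:ℕ):ℝ) by norm_num, hnegpow r hr.1]
        field_simp
      rw [he]
      exact hlb r hr 1 (by nlinarith [sq_nonneg (b r)]))
  set A₁ := φ t₀ - X₁ t₀ with hA₁def
  clear_value A₁
  -- Phase 1b : b r ^ 2 ≥ K₁ * r ^ (-1/2)
  set Ψ₁ : ℝ → ℝ := fun x => 4 * A₁ * x - (1/2) * Real.log x with hΨ₁def
  have hbsq1 := bsq_lower b φ Ψ₁ (fun x => 4 * A₁ - (1/2) * x⁻¹) t₀ hbt₀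
    (fun r hr => by
      have h1 : HasDerivAt (fun x : ℝ => 4 * A₁ * x) (4 * A₁) r := by
        simpa using (hasDerivAt_id r).const_mul (4 * A₁)
      exact h1.sub ((Real.hasDerivAt_log hr.1.ne').const_mul (1/2)))
    (fun r hr => by
      have h1 := hphi1 r hr
      rw [hX₁def] at h1
      simp only [Real.rpow_neg_one] at h1
      linarith)
  set K₁ := b t₀ ^ 2 * Real.exp (-(4 * |A₁| * t₀) + (1/2) * Real.log t₀) with hK₁def
  have hK₁pos : 0 < K₁ := by rw [hK₁def]; exact mul_pos hBpos (Real.exp_pos _)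
  clear_value K₁
  have hbsq1' : ∀ r ∈ Ioc (0:ℝ) t₀, K₁ * r ^ (-(1/2):ℝ) ≤ b r ^ 2 := by
    intro r hr
    have h1 := hbsq1 r hr
    have h2 : K₁ * r ^ (-(1/2):ℝ) ≤ b t₀ ^ 2 * Real.exp (Ψ₁ r - Ψ₁ t₀) := by
      rw [hK₁def, Real.rpow_def_of_pos hr.1, mul_assoc, ← Real.exp_add]
      apply mul_le_mul_of_nonneg_left _ hBpos.le
      apply Real.exp_le_exp.mpr
      have := habs A₁ r t₀ hr.1 hr.2
      rw [hΨ₁def]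
      dsimp only
      linarith
    linarith
  clear_value Ψ₁
  -- Phase 2 : φ r ≤ A₂ + X₂ r
  set X₂ : ℝ → ℝ := fun x => -(K₁/12) * x ^ (-(3/2):ℝ) with hX₂def
  have hphi2 := phi_upper φ X₂ (fun r => (1 + b r ^ 2) / (2 * h r ^ 2))
    (fun r => -(K₁/12) * (-(3/2)) * r ^ ((-(3/2):ℝ) - 1)) t₀ hφt₀
    (fun r hr => hrpowD (-(K₁/12)) (-(3/2)) r hr.1.ne')
    (fun r hr => by
      have he : -(K₁/12) * (-(3/2):ℝ) * r ^ ((-(3/2):ℝ) - 1)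
          = (K₁ * r ^ (-(1/2):ℝ)) / (8 * r ^ 2) := by
        have h1 : r ^ ((-(1/2):ℝ)) = r ^ ((-(3/2):ℝ) - 1) * r ^ 2 := by
          rw [← Real.rpow_natCast r 2, ← Real.rpow_add hr.1]
          norm_num
        rw [h1]
        have h2 : (r:ℝ) ^ 2 ≠ 0 := pow_ne_zero 2 hr.1.ne'
        field_simp
        rw [mul_div_assoc, div_self hr.1.ne']
        ring
      rw [he]
      exact hlb r hr _ (by linarith [hbsq1' r hr, sq_nonneg (b r)]))
  set A₂ := φ t₀ - X₂ t₀ with hA₂def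
  clear_value A₂
  -- Phase 2b : b r ^ 2 ≥ K₂ exp (c₂ r ^ (-1/2))
  set c₂ := 2 * K₁ / 3 with hc₂def
  have hc₂pos : 0 < c₂ := by rw [hc₂def]; positivity
  set Ψ₂ : ℝ → ℝ := fun x => 4 * A₂ * x + c₂ * x ^ (-(1/2):ℝ) with hΨ₂def
  have hbsq2 := bsq_lower b φ Ψ₂ (fun x => 4 * A₂ + c₂ * (-(1/2)) * x ^ ((-(1/2):ℝ) - 1)) t₀ hbt₀
    (fun r hr => by
      have h1 : HasDerivAt (fun x : ℝ => 4 * A₂ * x) (4 * A₂) r := by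
        simpa using (hasDerivAt_id r).const_mul (4 * A₂)
      exact h1.add (hrpowD c₂ (-(1/2)) r hr.1.ne'))
    (fun r hr => by
      have h1 := hphi2 r hr
      rw [hX₂def] at h1
      dsimp only at h1
      have he : c₂ * (-(1/2):ℝ) * r ^ ((-(1/2):ℝ) - 1) = -(K₁/3) * r ^ (-(3/2):ℝ) := by
        rw [show ((-(1/2):ℝ) - 1) = -(3/2) by norm_num, hc₂def]
        ring
      rw [he]
      linarith)
  set K₂ := b t₀ ^ 2 * Real.exp (-(4 * |A₂| * t₀) - c₂ * t₀ ^ (-(1/2):ℝ)) with hK₂def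
  have hK₂pos : 0 < K₂ := by rw [hK₂def]; exact mul_pos hBpos (Real.exp_pos _)
  have hbsq2' : ∀ r ∈ Ioc (0:ℝ) t₀, K₂ * Real.exp (c₂ * r ^ (-(1/2):ℝ)) ≤ b r ^ 2 := by
    intro r hr
    have h1 := hbsq2 r hr
    have h2 : K₂ * Real.exp (c₂ * r ^ (-(1/2):ℝ)) ≤ b t₀ ^ 2 * Real.exp (Ψ₂ r - Ψ₂ t₀) := by
      rw [hK₂def, mul_assoc, ← Real.exp_add]
      apply mul_le_mul_of_nonneg_left _ hBpos.le
      apply Real.exp_le_exp.mpr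
      have := habs A₂ r t₀ hr.1 hr.2
      rw [hΨ₂def]
      dsimp only
      linarith
    linarith
  clear_value Ψ₂
  clear_value K₂
  -- convert exponential to power : b r ^ 2 ≥ K₃ / r ^ 2
  set K₃ := K₂ * c₂ ^ 4 / 256 with hK₃def
  have hK₃pos : 0 < K₃ := by rw [hK₃def]; positivity
  have hbsq3' : ∀ r ∈ Ioc (0:ℝ) t₀, K₃ / r ^ 2 ≤ b r ^ 2 := by
    intro r hr
    set x := c₂ * r ^ (-(1/2):ℝ) with hxdef
    have hxpos : 0 < x := by
      rw [hxdef]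
      exact mul_pos hc₂pos (Real.rpow_pos_of_pos hr.1 _)
    clear_value x
    have h1 : x / 4 ≤ Real.exp (x / 4) := by
      have := Real.add_one_le_exp (x / 4)
      linarith
    have h2 : (x / 4) ^ (4:ℕ) ≤ Real.exp (x / 4) ^ (4:ℕ) :=
      pow_le_pow_left₀ (by positivity) h1 4
    have h3 : Real.exp (x / 4) ^ (4:ℕ) = Real.exp x := by
      rw [← Real.exp_nat_mul]
      push_cast
      ring_nf
    have h4 : x ^ 4 / 256 ≤ Real.exp x := by
      rw [h3, show ((x/4)^(4:ℕ)) = x ^ 4 / 256 from by ring] at h2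
      exact h2
    have h5 : x ^ 4 = c₂ ^ 4 * (r ^ 2)⁻¹ := by
      rw [hxdef, mul_pow]
      congr 1
      rw [← Real.rpow_natCast (r ^ (-(1/2):ℝ)) 4, ← Real.rpow_mul hr.1.le]
      norm_num
    have h6 : K₃ / r ^ 2 = K₂ * (x ^ 4 / 256) := by
      have h2r : (r:ℝ) ^ 2 ≠ 0 := pow_ne_zero 2 hr.1.ne'
      rw [h5, hK₃def]
      field_simp
    calc K₃ / r ^ 2 = K₂ * (x ^ 4 / 256) := h6
      _ ≤ K₂ * Real.exp x := mul_le_mul_of_nonneg_left h4 hK₂pos.le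
      _ ≤ b r ^ 2 := hxdef ▸ hbsq2' r hr
  clear_value K₃
  -- Phase 3 : φ r ≤ A₃ + X₃ r
  set X₃ : ℝ → ℝ := fun x => -(K₃/24) * x ^ (-3:ℝ) with hX₃def
  have hphi3 := phi_upper φ X₃ (fun r => (1 + b r ^ 2) / (2 * h r ^ 2))
    (fun r => -(K₃/24) * (-3) * r ^ ((-3:ℝ) - 1)) t₀ hφt₀
    (fun r hr => hrpowD (-(K₃/24)) (-3) r hr.1.ne')
    (fun r hr => by
      have he : -(K₃/24) * (-3:ℝ) * r ^ ((-3:ℝ) - 1) = (K₃ / r ^ 2) / (8 * r ^ 2) := by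
        rw [show ((-3:ℝ) - 1) = -((4:ℕ):ℝ) by norm_num, hnegpow r hr.1]
        have h2 : (r:ℝ) ^ 2 ≠ 0 := pow_ne_zero 2 hr.1.ne'
        have h4 : (r:ℝ) ^ 4 ≠ 0 := pow_ne_zero 4 hr.1.ne'
        field_simp
        ring
      rw [he]
      exact hlb r hr _ (by linarith [hbsq3' r hr, sq_nonneg (b r)]))
  set A₃ := φ t₀ - X₃ t₀ with hA₃def
  clear_value A₃
  -- Phase 3b : b r ^ 2 ≥ K₄ exp (c₅ r ^ (-2))
  set c₅ := K₃ / 12 with hc₅def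
  have hc₅pos : 0 < c₅ := by rw [hc₅def]; positivity
  set Ψ₃ : ℝ → ℝ := fun x => 4 * A₃ * x + c₅ * x ^ (-2:ℝ) with hΨ₃def
  have hbsq3 := bsq_lower b φ Ψ₃ (fun x => 4 * A₃ + c₅ * (-2) * x ^ ((-2:ℝ) - 1)) t₀ hbt₀
    (fun r hr => by
      have h1 : HasDerivAt (fun x : ℝ => 4 * A₃ * x) (4 * A₃) r := by
        simpa using (hasDerivAt_id r).const_mul (4 * A₃)
      exact h1.add (hrpowD c₅ (-2) r hr.1.ne'))
    (fun r hr => by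
      have h1 := hphi3 r hr
      rw [hX₃def] at h1
      dsimp only at h1
      have he : c₅ * (-2:ℝ) * r ^ ((-2:ℝ) - 1) = -(K₃/6) * r ^ (-3:ℝ) := by
        rw [show ((-2:ℝ) - 1) = -3 by norm_num, hc₅def]
        ring
      rw [he]
      linarith)
  set K₄ := b t₀ ^ 2 * Real.exp (-(4 * |A₃| * t₀) - c₅ * t₀ ^ (-2:ℝ)) with hK₄def
  have hK₄pos : 0 < K₄ := by rw [hK₄def]; exact mul_pos hBpos (Real.exp_pos _)
  have hbsq4 : ∀ r ∈ Ioc (0:ℝ) t₀, K₄ * Real.exp (c₅ / r ^ 2) ≤ b r ^ 2 := by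
    intro r hr
    have h1 := hbsq3 r hr
    have hre : c₅ / r ^ 2 = c₅ * r ^ (-2:ℝ) := by
      rw [show ((-2):ℝ) = -((2:ℕ):ℝ) by norm_num, hnegpow r hr.1]
      ring
    rw [hre]
    have h2 : K₄ * Real.exp (c₅ * r ^ (-2:ℝ)) ≤ b t₀ ^ 2 * Real.exp (Ψ₃ r - Ψ₃ t₀) := by
      rw [hK₄def, mul_assoc, ← Real.exp_add]
      apply mul_le_mul_of_nonneg_left _ hBpos.le
      apply Real.exp_le_exp.mpr
      have := habs A₃ r t₀ hr.1 hr.2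
      rw [hΨ₃def]
      dsimp only
      linarith
    linarith
  clear_value Ψ₃
  clear_value K₄
  -- conclusion
  refine ⟨c₅, max 1 (Real.log (b R ^ 2 / K₄)), t₀, hc₅pos,
    lt_of_lt_of_le one_pos (le_max_left _ _), ht₀pos, ht₀R, ?_⟩
  intro r hr
  set c₆ := max 1 (Real.log (b R ^ 2 / K₄)) with hc₆def
  have hkey : b R ^ 2 * Real.exp (-c₆) ≤ K₄ := by
    have h1 : Real.exp (-c₆) ≤ Real.exp (-(Real.log (b R ^ 2 / K₄))) := by
      apply Real.exp_le_exp.mpr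
      have := le_max_right 1 (Real.log (b R ^ 2 / K₄))
      rw [hc₆def]
      linarith
    have h2 : Real.exp (-(Real.log (b R ^ 2 / K₄))) = K₄ / b R ^ 2 := by
      rw [Real.exp_neg, Real.exp_log (div_pos hbR2 hK₄pos)]
      rw [inv_div]
    rw [h2] at h1
    calc b R ^ 2 * Real.exp (-c₆) ≤ b R ^ 2 * (K₄ / b R ^ 2) :=
          mul_le_mul_of_nonneg_left h1 hbR2.le
      _ = K₄ := by field_simp
  calc b R ^ 2 * Real.exp (-c₆ + c₅ / r ^ 2)
      = (b R ^ 2 * Real.exp (-c₆)) * Real.exp (c₅ / r ^ 2) := by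
        rw [mul_assoc, ← Real.exp_add]
    _ ≤ K₄ * Real.exp (c₅ / r ^ 2) :=
        mul_le_mul_of_nonneg_right hkey (Real.exp_pos _).le
    _ ≤ b r ^ 2 := hbsq4 r hr
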